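/- Let X be a set of chords of the convex n-gon and suppose some vertex p is an endpoint of no chord of X. Then every triangulation avoiding X is joined, by a sequence of flips in which every intermediate triangulation avoids X, to the star triangulation at p; in particular F_{-X} is connected. -/

import Mathlib

namespace FlipCut

/-- `x` lies strictly inside the open cyclic arc from `a` to `b`
(going forward in the cyclic order on `ZMod n`). -/
def Btw (n : ℕ) (a x b : ZMod n) : Prop :=
  0 < (x - a).val ∧ (x - a).val < (b - a).val

/-- An unordered pair of vertices of the convex `n`-gon is a *chord*:
its two endpoints are distinct and not cyclically adjacent. -/
def IsChord (n : ℕ) (e : Sym2 (ZMod n)) : Prop :=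
  ¬ e.IsDiag ∧ ∀ a ∈ e, ∀ b ∈ e, a ≠ b → b ≠ a + 1 ∧ b ≠ a - 1

/-- Two chords *cross*: they can be written as `{a, b}` and `{c, d}` where `c`
lies strictly inside the open cyclic arc from `a` to `b` and `d` lies strictly
inside the open cyclic arc from `b` to `a` (i.e. the endpoint pairs separate
each other in the cyclic order, equivalently exactly one of `c, d` lies in the
open cyclic arc from `a` to `b`). -/
def Crosses (n : ℕ) (e f : Sym2 (ZMod n)) : Prop :=
  ∃ a b c d : ZMod n, e = s(a, b) ∧ f = s(c, d) ∧ Btw n a c b ∧ Btw n b d a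

/-- A *triangulation* of the convex `n`-gon: a set of exactly `n - 3`
pairwise non-crossing chords. -/
def IsTriangulation (n : ℕ) (T : Finset (Sym2 (ZMod n))) : Prop :=
  T.card = n - 3 ∧ (∀ e ∈ T, IsChord n e) ∧
    ∀ e ∈ T, ∀ f ∈ T, e ≠ f → ¬ Crosses n e f

/-- Triangulations `T` and `T'` differ by a *flip*: their symmetric difference
has exactly two chords. -/
def FlipAdj (n : ℕ) (T T' : Finset (Sym2 (ZMod n))) : Prop :=
  (symmDiff T T').card = 2

/-- `T` *avoids* `X`: `T` contains no chord of `X`. -/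
def Avoids (n : ℕ) (T X : Finset (Sym2 (ZMod n))) : Prop :=
  ∀ e ∈ X, e ∉ T

/-- A vertex of the flip graph `F₋ₓ`: a triangulation avoiding `X`. -/
def AvoidingTri (n : ℕ) (X T : Finset (Sym2 (ZMod n))) : Prop :=
  IsTriangulation n T ∧ Avoids n T X

/-- A single edge of the flip graph `F₋ₓ`: both endpoints are triangulations
avoiding `X` and they differ by a flip. -/
def FlipStep (n : ℕ) (X T T' : Finset (Sym2 (ZMod n))) : Prop :=
  AvoidingTri n X T ∧ AvoidingTri n X T' ∧ FlipAdj n T T'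

/-- `S` and `T` are joined by a path in the flip graph `F₋ₓ`: a sequence of
flips in which every intermediate triangulation avoids `X`. -/
def FlipConn (n : ℕ) (X S T : Finset (Sym2 (ZMod n))) : Prop :=
  Relation.ReflTransGen (FlipStep n X) S T

/-- The flip graph `F₋ₓ` is connected. -/
def FlipGraphConnected (n : ℕ) (X : Finset (Sym2 (ZMod n))) : Prop :=
  ∀ S T, AvoidingTri n X S → AvoidingTri n X T → FlipConn n X S T

/-- `X` is a *flip cut set*: a set of chords such that the flip graph `F₋ₓ`
is disconnected. -/
def IsFlipCutSet (n : ℕ) (X : Finset (Sym2 (ZMod n))) : Prop :=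
  (∀ e ∈ X, IsChord n e) ∧ ¬ FlipGraphConnected n X


/-- The *star triangulation* at vertex `p`: its chords are exactly the pairs
`{p, q}` with `q ∉ {p - 1, p, p + 1}`. -/
def starTri (n : ℕ) [NeZero n] (p : ZMod n) : Finset (Sym2 (ZMod n)) :=
  ((Finset.univ : Finset (ZMod n)).filter
      (fun q => q ≠ p - 1 ∧ q ≠ p ∧ q ≠ p + 1)).image (fun q => s(p, q))

section Aux

set_option linter.unusedSectionVars false

open Finset

variable {n : ℕ} [NeZero n]

private lemma npos : 0 < n := Nat.pos_of_ne_zero (NeZero.ne n)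

private lemma cast_nat_inj {i j : ℕ} (hi : i < n) (hj : j < n)
    (h : (i : ZMod n) = j) : i = j := by
  have := congrArg ZMod.val h
  rwa [ZMod.val_cast_of_lt hi, ZMod.val_cast_of_lt hj] at this

private lemma addcast_inj {p : ZMod n} {i j : ℕ} (hi : i < n) (hj : j < n)
    (h : p + (i : ZMod n) = p + j) : i = j :=
  cast_nat_inj hi hj (add_left_cancel h)

private lemma val_sub_cast {i j : ℕ} (hi : i < n) (hj : j < n) :
    ((j : ZMod n) - (i : ZMod n)).val = if i ≤ j then j - i else n + j - i := by
  split_ifs with h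
  · rw [← Nat.cast_sub h, ZMod.val_cast_of_lt (by omega)]
  · have e : ((n + j - i : ℕ) : ZMod n) = (j : ZMod n) - i := by
      have h2 : (((n + j) : ℕ) : ZMod n) = (j : ZMod n) := by
        push_cast [ZMod.natCast_self]; ring
      rw [Nat.cast_sub (by omega), h2]
    rw [← e, ZMod.val_cast_of_lt (by omega)]

private lemma btw_iff {p : ZMod n} {i k j : ℕ} (hi : i < n) (hk : k < n) (hj : j < n) :
    Btw n (p + (i : ZMod n)) (p + (k : ZMod n)) (p + (j : ZMod n)) ↔
      0 < (if i ≤ k then k - i else n + k - i) ∧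
        (if i ≤ k then k - i else n + k - i) < (if i ≤ j then j - i else n + j - i) := by
  unfold Btw
  rw [add_sub_add_left_eq_sub, add_sub_add_left_eq_sub, val_sub_cast hi hk, val_sub_cast hi hj]

private lemma crosses_iff {p : ZMod n} {x y u v : ℕ}
    (hxy : x < y) (hy : y < n) (huv : u < v) (hv : v < n) :
    Crosses n s(p + (x : ZMod n), p + (y : ZMod n)) s(p + (u : ZMod n), p + (v : ZMod n)) ↔
      (x < u ∧ u < y ∧ y < v) ∨ (u < x ∧ x < v ∧ v < y) := by
  have hx : x < n := by omega
  have hu : u < n := by omega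
  constructor
  · rintro ⟨a, b, c, d, hab, hcd, h1, h2⟩
    rw [Sym2.eq_iff] at hab hcd
    rcases hab with ⟨ha, hb⟩ | ⟨ha, hb⟩ <;> rcases hcd with ⟨hc, hd⟩ | ⟨hc, hd⟩ <;>
      subst ha <;> subst hb <;> subst hc <;> subst hd
    · rw [btw_iff hx hu hy] at h1; rw [btw_iff hy hv hx] at h2
      split_ifs at h1 h2 <;> omega
    · rw [btw_iff hx hv hy] at h1; rw [btw_iff hy hu hx] at h2
      split_ifs at h1 h2 <;> omega
    · rw [btw_iff hy hu hx] at h1; rw [btw_iff hx hv hy] at h2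
      split_ifs at h1 h2 <;> omega
    · rw [btw_iff hy hv hx] at h1; rw [btw_iff hx hu hy] at h2
      split_ifs at h1 h2 <;> omega
  · rintro (⟨h1, h2, h3⟩ | ⟨h1, h2, h3⟩)
    · refine ⟨p + (x : ZMod n), p + (y : ZMod n), p + (u : ZMod n), p + (v : ZMod n),
        rfl, rfl, ?_, ?_⟩
      · rw [btw_iff hx hu hy]; split_ifs <;> omega
      · rw [btw_iff hy hv hx]; split_ifs <;> omega
    · refine ⟨p + (x : ZMod n), p + (y : ZMod n), p + (v : ZMod n), p + (u : ZMod n),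
        rfl, Sym2.eq_swap, ?_, ?_⟩
      · rw [btw_iff hx hv hy]; split_ifs <;> omega
      · rw [btw_iff hy hu hx]; split_ifs <;> omega

/-- smaller coordinate of a chord relative to `p` -/
private def lo (p : ZMod n) (e : Sym2 (ZMod n)) : ℕ :=
  Sym2.lift ⟨fun a b => min (a - p).val (b - p).val, fun _ _ => min_comm _ _⟩ e

/-- larger coordinate of a chord relative to `p` -/
private def hi (p : ZMod n) (e : Sym2 (ZMod n)) : ℕ :=
  Sym2.lift ⟨fun a b => max (a - p).val (b - p).val, fun _ _ => max_comm _ _⟩ e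

private lemma lo_mk {p : ZMod n} {x y : ℕ} (hx : x < n) (hy : y < n) (h : x ≤ y) :
    lo p s(p + (x : ZMod n), p + (y : ZMod n)) = x := by
  simp only [lo, Sym2.lift_mk, add_sub_cancel_left, ZMod.val_cast_of_lt hx,
    ZMod.val_cast_of_lt hy]
  omega

private lemma hi_mk {p : ZMod n} {x y : ℕ} (hx : x < n) (hy : y < n) (h : x ≤ y) :
    hi p s(p + (x : ZMod n), p + (y : ZMod n)) = y := by
  simp only [hi, Sym2.lift_mk, add_sub_cancel_left, ZMod.val_cast_of_lt hx,
    ZMod.val_cast_of_lt hy]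
  omega

private lemma eq_add_one_iff {p : ZMod n} {i j : ℕ} (hi' : i < n) (hj : j < n) :
    p + (j : ZMod n) = p + (i : ZMod n) + 1 ↔ j = (i + 1) % n := by
  have h1 : p + (i : ZMod n) + 1 = p + (((i + 1) % n : ℕ) : ZMod n) := by
    rw [show (((i + 1) % n : ℕ) : ZMod n) = ((i + 1 : ℕ) : ZMod n) from ZMod.natCast_mod _ n]
    push_cast; ring
  rw [h1]
  constructor
  · exact fun h => addcast_inj hj (Nat.mod_lt _ npos) h
  · rintro rfl; rfl

private lemma chord_repr (p : ZMod n) {e : Sym2 (ZMod n)} (he : IsChord n e) :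
    e = s(p + (lo p e : ZMod n), p + (hi p e : ZMod n)) ∧ lo p e < hi p e ∧
      hi p e ≤ n - 1 ∧ 2 ≤ hi p e - lo p e ∧ ¬(lo p e = 0 ∧ hi p e = n - 1) := by
  induction e with
  | _ a b =>
    obtain ⟨hd, hadj⟩ := he
    have hab : a ≠ b := by simpa [Sym2.mk_isDiag_iff] using hd
    obtain ⟨h1, h2⟩ := hadj a (Sym2.mem_mk_left a b) b (Sym2.mem_mk_right a b) hab
    set xa := (a - p).val with hxa
    set xb := (b - p).val with hxb
    have hxa_lt : xa < n := ZMod.val_lt _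
    have hxb_lt : xb < n := ZMod.val_lt _
    have hca : ((xa : ℕ) : ZMod n) = a - p := ZMod.natCast_rightInverse (a - p)
    have hcb : ((xb : ℕ) : ZMod n) = b - p := ZMod.natCast_rightInverse (b - p)
    have ha : a = p + (xa : ZMod n) := by rw [hca]; ring
    have hb : b = p + (xb : ZMod n) := by rw [hcb]; ring
    have hne : xa ≠ xb := fun h => hab (by rw [ha, hb, h])
    have hA1 : ¬ (xb = (xa + 1) % n) := by
      intro hh
      exact h1 (by rw [ha, hb, eq_add_one_iff hxa_lt hxb_lt]; exact hh)
    have hA2 : ¬ (xa = (xb + 1) % n) := by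
      intro hh
      apply h2
      rw [eq_sub_iff_add_eq, eq_comm, ha, hb]
      rw [eq_add_one_iff hxb_lt hxa_lt]
      exact hh
    have hm1 : xa + 1 < n → (xa + 1) % n = xa + 1 := fun h => Nat.mod_eq_of_lt h
    have hm1' : xa + 1 = n → (xa + 1) % n = 0 := fun h => by rw [h, Nat.mod_self]
    have hm2 : xb + 1 < n → (xb + 1) % n = xb + 1 := fun h => Nat.mod_eq_of_lt h
    have hm2' : xb + 1 = n → (xb + 1) % n = 0 := fun h => by rw [h, Nat.mod_self]
    rcases Nat.lt_or_ge xa xb with hlt | hge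
    · have hE : s(a, b) = s(p + ((xa : ℕ) : ZMod n), p + ((xb : ℕ) : ZMod n)) := by
        rw [← ha, ← hb]
      rw [hE, lo_mk hxa_lt hxb_lt (le_of_lt hlt), hi_mk hxa_lt hxb_lt (le_of_lt hlt)]
      refine ⟨rfl, hlt, by omega, ?_, ?_⟩
      · have := hm1 (by omega)
        omega
      · rintro ⟨h0, hN⟩
        apply hA2
        rw [h0, hm2' (by omega)]
    · have hlt : xb < xa := by omega
      have hE : s(a, b) = s(p + ((xb : ℕ) : ZMod n), p + ((xa : ℕ) : ZMod n)) := by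
        rw [← ha, ← hb, Sym2.eq_swap]
      rw [hE, lo_mk hxb_lt hxa_lt (le_of_lt hlt), hi_mk hxb_lt hxa_lt (le_of_lt hlt)]
      refine ⟨rfl, hlt, by omega, ?_, ?_⟩
      · have := hm2 (by omega)
        omega
      · rintro ⟨h0, hN⟩
        apply hA1
        rw [h0, hm1' (by omega)]

private lemma isChord_mk (hn3 : 3 ≤ n) {p : ZMod n} {x y : ℕ} (hxy : x < y) (hy : y ≤ n - 1)
    (h2 : 2 ≤ y - x) (hw : ¬(x = 0 ∧ y = n - 1)) :
    IsChord n s(p + (x : ZMod n), p + (y : ZMod n)) := by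
  have hxn : x < n := by omega
  have hyn : y < n := by omega
  have hmx : x + 1 < n → (x + 1) % n = x + 1 := fun h => Nat.mod_eq_of_lt h
  have hmy : (y + 1) % n = if y + 1 = n then 0 else y + 1 := by
    split_ifs with h
    · rw [h, Nat.mod_self]
    · exact Nat.mod_eq_of_lt (by omega)
  have hne : p + (x : ZMod n) ≠ p + (y : ZMod n) := by
    intro h; exact absurd (addcast_inj hxn hyn h) (by omega)
  have key1 : p + (y : ZMod n) ≠ p + (x : ZMod n) + 1 := by
    rw [Ne, eq_add_one_iff hxn hyn]
    intro hh
    rcases Nat.lt_or_ge (x + 1) n with h | h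
    · rw [hmx h] at hh; omega
    · have hx1 : x + 1 = n := by omega
      rw [hx1, Nat.mod_self] at hh
      omega
  have key2 : p + (x : ZMod n) ≠ p + (y : ZMod n) + 1 := by
    rw [Ne, eq_add_one_iff hyn hxn]
    rw [hmy]
    split_ifs with h <;> omega
  constructor
  · rw [Sym2.mk_isDiag_iff]; exact hne
  · intro a ha b hb hab
    rw [Sym2.mem_iff] at ha hb
    rcases ha with rfl | rfl <;> rcases hb with rfl | rfl
    · exact absurd rfl hab
    · exact ⟨key1, fun h => key2 (by rw [eq_comm, sub_eq_iff_eq_add] at h; rw [h])⟩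
    · exact ⟨key2, fun h => key1 (by rw [eq_comm, sub_eq_iff_eq_add] at h; rw [h])⟩
    · exact absurd rfl hab

private lemma pairNC {T : Finset (Sym2 (ZMod n))} (hT : IsTriangulation n T) {p : ZMod n}
    {e f : Sym2 (ZMod n)} (he : e ∈ T) (hf : f ∈ T) :
    ¬ (lo p e < lo p f ∧ lo p f < hi p e ∧ hi p e < hi p f) := by
  intro h
  have hnn : 0 < n := npos
  by_cases hef : e = f
  · rw [hef] at h; omega
  · obtain ⟨re1, re2, re3, _, _⟩ := chord_repr p (hT.2.1 e he)
    obtain ⟨rf1, rf2, rf3, _, _⟩ := chord_repr p (hT.2.1 f hf)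
    apply hT.2.2 e he f hf hef
    rw [re1, rf1]
    exact (crosses_iff re2 (by omega) rf2 (by omega)).mpr (Or.inl h)

private lemma starTri_card (hn3 : 3 ≤ n) (p : ZMod n) : (starTri n p).card = n - 3 := by
  have hknz : ∀ k : ℕ, 0 < k → k < n → ((k : ℕ) : ZMod n) ≠ 0 := by
    intro k hk hkn h
    have h0 : ((k : ℕ) : ZMod n) = ((0 : ℕ) : ZMod n) := by rw [h]; norm_num
    have := cast_nat_inj hkn (by omega) h0
    omega
  have h1 : p - 1 ≠ p := by
    intro h
    exact hknz 1 (by omega) (by omega) (by push_cast; linear_combination -h)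
  have h2 : p - 1 ≠ p + 1 := by
    intro h
    exact hknz 2 (by omega) (by omega) (by push_cast; linear_combination -h)
  have h3 : p ≠ p + 1 := by
    intro h
    exact hknz 1 (by omega) (by omega) (by push_cast; linear_combination -h)
  have hinj : Set.InjOn (fun q => s(p, q))
      ((Finset.univ.filter (fun q => q ≠ p - 1 ∧ q ≠ p ∧ q ≠ p + 1)) : Set (ZMod n)) := by
    intro q1 hq1 q2 hq2 heq
    simp only [coe_filter, Set.mem_setOf_eq, mem_univ, true_and] at hq1 hq2
    rcases Sym2.eq_iff.mp heq with ⟨_, h⟩ | ⟨hpa, hpb⟩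
    · exact h
    · exact absurd hpb hq1.2.1
  have hset : (Finset.univ.filter (fun q => q ≠ p - 1 ∧ q ≠ p ∧ q ≠ p + 1))
      = Finset.univ \ {p - 1, p, p + 1} := by
    ext q
    simp only [mem_filter, mem_univ, true_and, mem_sdiff, mem_insert, mem_singleton]
    tauto
  have hm1 : p - 1 ∉ ({p, p + 1} : Finset (ZMod n)) := by
    simp only [mem_insert, mem_singleton]
    push_neg
    exact ⟨h1, h2⟩
  have hm2 : p ∉ ({p + 1} : Finset (ZMod n)) := by
    simp only [mem_singleton]
    exact h3
  rw [starTri, Finset.card_image_of_injOn hinj, hset, card_sdiff_of_subset (subset_univ _),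
    card_insert_of_notMem hm1, card_insert_of_notMem hm2, card_singleton,
    Finset.card_univ, ZMod.card]

/-- the number of chords of `T` not incident to `p` -/
private def mes (p : ZMod n) (T : Finset (Sym2 (ZMod n))) : ℕ :=
  (T.filter (fun e => lo p e ≠ 0)).card

private lemma eq_star_of_mes_zero (hn3 : 3 ≤ n) {p : ZMod n} {T : Finset (Sym2 (ZMod n))}
    (hT : IsTriangulation n T) (h0 : mes p T = 0) : T = starTri n p := by
  apply Finset.eq_of_subset_of_card_le _ (by rw [starTri_card hn3, hT.1])
  intro e he
  have hlo : lo p e = 0 := by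
    by_contra hh
    have hmem : e ∈ T.filter (fun e => lo p e ≠ 0) := mem_filter.mpr ⟨he, hh⟩
    rw [mes, Finset.card_eq_zero] at h0
    rw [h0] at hmem
    exact absurd hmem (notMem_empty e)
  obtain ⟨hfe, hlt, hle, h2, hw⟩ := chord_repr p (hT.2.1 e he)
  have hyne : hi p e ≠ n - 1 := fun h => hw ⟨hlo, h⟩
  rw [starTri, Finset.mem_image]
  refine ⟨p + (hi p e : ZMod n), ?_, ?_⟩
  · rw [mem_filter]
    refine ⟨mem_univ _, ?_, ?_, ?_⟩
    · intro hh
      have hI : ((n - 1 : ℕ) : ZMod n) = -1 := by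
        rw [Nat.cast_sub (by omega), ZMod.natCast_self]; ring
      have hz : ((hi p e : ℕ) : ZMod n) = ((n - 1 : ℕ) : ZMod n) := by
        rw [hI]; linear_combination hh
      have := cast_nat_inj (by omega) (by omega) hz
      omega
    · intro hh
      have hz : ((hi p e : ℕ) : ZMod n) = ((0 : ℕ) : ZMod n) := by
        push_cast; linear_combination hh
      have := cast_nat_inj (by omega) (by omega) hz
      omega
    · intro hh
      have hz : ((hi p e : ℕ) : ZMod n) = ((1 : ℕ) : ZMod n) := by
        push_cast; linear_combination hh
      have := cast_nat_inj (by omega) (by omega) hz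
      omega
  · have h00 : s(p + ((0 : ℕ) : ZMod n), p + (hi p e : ZMod n))
        = s(p, p + (hi p e : ZMod n)) := by norm_num
    rw [hlo] at hfe
    exact (hfe.trans h00).symm

private lemma flip_core {X T : Finset (Sym2 (ZMod n))} (hn3 : 3 ≤ n) {p : ZMod n}
    (hT : IsTriangulation n T) (hA : Avoids n T X) (hp : ∀ e ∈ X, p ∉ e)
    {eold : Sym2 (ZMod n)} (hold : eold ∈ T) (hlold : lo p eold ≠ 0)
    {xj : ℕ} (hxj2 : 2 ≤ xj) (hxjn : xj ≤ n - 2)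
    (hnew : s(p, p + (xj : ZMod n)) ∉ T)
    (honly : ∀ f ∈ T, f ≠ eold → ¬(0 < lo p f ∧ lo p f < xj ∧ xj < hi p f)) :
    FlipStep n X T (insert s(p, p + (xj : ZMod n)) (T.erase eold)) ∧
      mes p (insert s(p, p + (xj : ZMod n)) (T.erase eold)) + 1 = mes p T := by
  have hnn : 0 < n := npos
  set enew := s(p, p + (xj : ZMod n)) with henew
  have hform : enew = s(p + ((0 : ℕ) : ZMod n), p + (xj : ZMod n)) := by
    rw [henew]; norm_num
  have hlonew : lo p enew = 0 := by
    rw [hform]; exact lo_mk (by omega) (by omega) (by omega)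
  have hhinew : hi p enew = xj := by
    rw [hform]; exact hi_mk (by omega) (by omega) (by omega)
  have hnne : enew ≠ eold := fun h => hlold (by rw [← h, hlonew])
  have hchord_new : IsChord n enew := by
    rw [hform]
    exact isChord_mk hn3 (by omega) (by omega) (by omega) (by omega)
  have hnewer : enew ∉ T.erase eold := fun h => hnew (mem_of_mem_erase h)
  have keyNC : ∀ f ∈ T, f ≠ eold → ¬ Crosses n enew f ∧ ¬ Crosses n f enew := by
    intro f hf hne
    obtain ⟨hfe, hlt, hle, h2, hw⟩ := chord_repr p (hT.2.1 f hf)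
    constructor
    · rw [hform, hfe, crosses_iff (by omega) (by omega) hlt (by omega)]
      rintro (h | h)
      · exact honly f hf hne ⟨h.1, h.2.1, h.2.2⟩
      · omega
    · rw [hfe, hform, crosses_iff hlt (by omega) (by omega) (by omega)]
      rintro (h | h)
      · omega
      · exact honly f hf hne ⟨h.1, h.2.1, h.2.2⟩
  have hTpos : 0 < T.card := Finset.card_pos.mpr ⟨eold, hold⟩
  have htri : IsTriangulation n (insert enew (T.erase eold)) := by
    refine ⟨?_, ?_, ?_⟩
    · rw [card_insert_of_notMem hnewer, card_erase_of_mem hold, hT.1]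
      rw [hT.1] at hTpos
      omega
    · intro e he
      rcases mem_insert.mp he with rfl | h
      · exact hchord_new
      · exact hT.2.1 e (mem_of_mem_erase h)
    · intro e he f hf hnef
      rcases mem_insert.mp he with rfl | he' <;> rcases mem_insert.mp hf with rfl | hf'
      · exact absurd rfl hnef
      · exact (keyNC f (mem_of_mem_erase hf') (ne_of_mem_erase hf')).1
      · exact (keyNC e (mem_of_mem_erase he') (ne_of_mem_erase he')).2
      · exact hT.2.2 e (mem_of_mem_erase he') f (mem_of_mem_erase hf') hnef
  have havoid : Avoids n (insert enew (T.erase eold)) X := by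
    intro e he hmem
    rcases mem_insert.mp hmem with rfl | h
    · exact hp _ he (Sym2.mem_mk_left _ _)
    · exact hA e he (mem_of_mem_erase h)
  have hadj : FlipAdj n T (insert enew (T.erase eold)) := by
    have hsd : symmDiff T (insert enew (T.erase eold)) = {eold, enew} := by
      ext g
      simp only [Finset.mem_symmDiff, mem_insert, mem_erase, mem_singleton]
      by_cases hg1 : g = eold <;> by_cases hg2 : g = enew
      · exact absurd (hg2 ▸ hg1) hnne
      · subst hg1; simp [hold, hnew, Ne.symm hnne, hg2]
      · subst hg2; simp [hnew, hnne]
      · simp [hg1, hg2]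
    show (symmDiff T (insert enew (T.erase eold))).card = 2
    rw [hsd, card_insert_of_notMem (by simp [Ne.symm hnne]), card_singleton]
  have hfilt : (insert enew (T.erase eold)).filter (fun e => lo p e ≠ 0)
      = (T.filter (fun e => lo p e ≠ 0)).erase eold := by
    ext g
    simp only [mem_filter, mem_insert, mem_erase]
    constructor
    · rintro ⟨rfl | ⟨hg1, hg2⟩, hg3⟩
      · exact absurd hlonew hg3
      · exact ⟨hg1, hg2, hg3⟩
    · rintro ⟨hg1, hg2, hg3⟩
      exact ⟨Or.inr ⟨hg1, hg2⟩, hg3⟩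
  have hmold : eold ∈ T.filter (fun e => lo p e ≠ 0) := mem_filter.mpr ⟨hold, hlold⟩
  have hmespos : 0 < mes p T := Finset.card_pos.mpr ⟨eold, hmold⟩
  have hmes : mes p (insert enew (T.erase eold)) + 1 = mes p T := by
    rw [mes, hfilt, card_erase_of_mem hmold]
    rw [mes] at hmespos ⊢
    omega
  exact ⟨⟨⟨hT, hA⟩, ⟨htri, havoid⟩, hadj⟩, hmes⟩

private lemma exists_step {X T : Finset (Sym2 (ZMod n))} (hn3 : 3 ≤ n) {p : ZMod n}
    (hp : ∀ e ∈ X, p ∉ e) (hT : IsTriangulation n T) (hA : Avoids n T X)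
    (hpos : 0 < mes p T) :
    ∃ T', FlipStep n X T T' ∧ mes p T' + 1 = mes p T := by
  have hnn : 0 < n := npos
  obtain ⟨e₀, he₀⟩ := Finset.card_pos.mp hpos
  rw [mem_filter] at he₀
  set F := (Finset.Icc 2 (n - 2)).filter (fun i : ℕ => s(p, p + (i : ZMod n)) ∈ T) with hF
  have himage : T.filter (fun e => lo p e = 0) = F.image (fun i : ℕ => s(p, p + (i : ZMod n))) := by
    ext e
    simp only [mem_filter, mem_image, mem_Icc, hF]
    constructor
    · rintro ⟨he, hlo⟩
      obtain ⟨hfe, hlt, hle, h2, hw⟩ := chord_repr p (hT.2.1 e he)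
      have h00 : s(p + ((0 : ℕ) : ZMod n), p + (hi p e : ZMod n))
          = s(p, p + (hi p e : ZMod n)) := by norm_num
      rw [hlo] at hfe
      have hfe' : e = s(p, p + (hi p e : ZMod n)) := hfe.trans h00
      have hne : hi p e ≠ n - 1 := fun h => hw ⟨hlo, h⟩
      exact ⟨hi p e, ⟨⟨by omega, by omega⟩, by rw [← hfe']; exact he⟩, (hfe').symm⟩
    · rintro ⟨i, ⟨⟨hi2, hin⟩, hiT⟩, rfl⟩
      refine ⟨hiT, ?_⟩
      have hform : s(p, p + (i : ZMod n)) = s(p + ((0 : ℕ) : ZMod n), p + (i : ZMod n)) := by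
        norm_num
      rw [hform, lo_mk (by omega) (by omega) (by omega)]
  have hinj : Set.InjOn (fun i : ℕ => s(p, p + (i : ZMod n))) F := by
    intro i hi' j hj' heq
    simp only [coe_filter, Set.mem_setOf_eq, mem_Icc, hF] at hi' hj'
    rcases Sym2.eq_iff.mp heq with ⟨_, h⟩ | ⟨h1, h2⟩
    · exact addcast_inj (by omega) (by omega) h
    · exfalso
      have h1' : p + ((0 : ℕ) : ZMod n) = p + (j : ZMod n) := by
        rw [Nat.cast_zero, add_zero]; exact h1
      have := addcast_inj (by omega) (by omega) h1'
      omega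
  have hsplit : (T.filter (fun e => lo p e = 0)).card + mes p T = T.card := by
    rw [mes]
    exact Finset.card_filter_add_card_filter_not (p := fun e => lo p e = 0)
  have hFc : F.card = (T.filter (fun e => lo p e = 0)).card := by
    rw [himage, Finset.card_image_of_injOn hinj]
  have hmesle : mes p T ≤ T.card := Finset.card_filter_le _ _
  have hFcard : F.card < (Finset.Icc 2 (n - 2)).card := by
    rw [Nat.card_Icc]
    have hTc := hT.1
    omega
  have hjex : ∃ j ∈ Finset.Icc 2 (n - 2), j ∉ F := by
    by_contra hno
    push_neg at hno
    have := Finset.card_le_card (fun j hj => hno j hj)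
    omega
  obtain ⟨j, hjmem, hjnot⟩ := hjex
  rw [mem_Icc] at hjmem
  have hfanT : s(p, p + (j : ZMod n)) ∉ T := by
    intro h
    exact hjnot (by rw [hF, mem_filter, mem_Icc]; exact ⟨hjmem, h⟩)
  set C := T.filter (fun e => 0 < lo p e ∧ lo p e < j ∧ j < hi p e) with hC
  rcases C.eq_empty_or_nonempty with hCe | hCne
  · have honly : ∀ f ∈ T, f ≠ e₀ → ¬(0 < lo p f ∧ lo p f < j ∧ j < hi p f) := by
      intro f hf _ hcond
      have : f ∈ C := by rw [hC, mem_filter]; exact ⟨hf, hcond⟩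
      rw [hCe] at this
      exact absurd this (notMem_empty f)
    have hfc := flip_core hn3 hT hA hp he₀.1 he₀.2 hjmem.1 hjmem.2 hfanT honly
    exact ⟨_, hfc.1, hfc.2⟩
  · obtain ⟨e₁, he₁C, hmax⟩ := Finset.exists_max_image C (fun e => hi p e - lo p e) hCne
    rw [hC, mem_filter] at he₁C
    obtain ⟨he₁, hcr1, hcr2, hcr3⟩ := he₁C
    obtain ⟨hE1, hab, hbn, h2ab, hwab⟩ := chord_repr p (hT.2.1 e₁ he₁)
    set a := lo p e₁ with ha
    set b := hi p e₁ with hb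
    set S := (Finset.Icc (a + 1) (b - 1)).filter
      (fun y => y = a + 1 ∨ s(p + (a : ZMod n), p + (y : ZMod n)) ∈ T) with hS
    have hSne : S.Nonempty :=
      ⟨a + 1, by rw [hS, mem_filter, mem_Icc]; exact ⟨⟨le_refl _, by omega⟩, Or.inl rfl⟩⟩
    set x := S.max' hSne with hx
    have hxIcc := (mem_filter.mp (S.max'_mem hSne)).1
    have hxor := (mem_filter.mp (S.max'_mem hSne)).2
    obtain ⟨hax, hxb⟩ := mem_Icc.mp hxIcc
    have hxle : ∀ y, a + 1 ≤ y → y ≤ b - 1 → s(p + (a : ZMod n), p + (y : ZMod n)) ∈ T → y ≤ x :=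
      fun y h1 h2 h3 => S.le_max' y (by rw [hS, mem_filter, mem_Icc]; exact ⟨⟨h1, h2⟩, Or.inr h3⟩)
    have haxT : a + 1 < x → s(p + (a : ZMod n), p + (x : ZMod n)) ∈ T := by
      intro h
      rcases hxor with h' | h'
      · omega
      · exact h'
    have hloax : a + 1 < x → lo p s(p + (a : ZMod n), p + (x : ZMod n)) = a :=
      fun _ => lo_mk (by omega) (by omega) (by omega)
    have hhiax : a + 1 < x → hi p s(p + (a : ZMod n), p + (x : ZMod n)) = x :=
      fun _ => hi_mk (by omega) (by omega) (by omega)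
    have hwidth : ∀ g ∈ T, 0 < lo p g → lo p g < j → j < hi p g → hi p g - lo p g ≤ b - a :=
      fun g hg h1 h2 h3 => hmax g (by rw [hC, mem_filter]; exact ⟨hg, h1, h2, h3⟩)
    have hnew : s(p, p + (x : ZMod n)) ∉ T := by
      intro hmem
      have hform : s(p, p + (x : ZMod n)) = s(p + ((0 : ℕ) : ZMod n), p + (x : ZMod n)) := by
        norm_num
      have hlon : lo p s(p, p + (x : ZMod n)) = 0 := by
        rw [hform]; exact lo_mk (by omega) (by omega) (by omega)
      have hhin : hi p s(p, p + (x : ZMod n)) = x := by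
        rw [hform]; exact hi_mk (by omega) (by omega) (by omega)
      exact pairNC (p := p) hT hmem he₁ (by rw [hlon, hhin]; exact ⟨by omega, by omega, by omega⟩)
    have honly : ∀ f ∈ T, f ≠ e₁ → ¬(0 < lo p f ∧ lo p f < x ∧ x < hi p f) := by
      intro f hf hne hK
      obtain ⟨rf1, rflt, rfle, rf2, rfw⟩ := chord_repr p (hT.2.1 f hf)
      set s := lo p f with hs
      set t := hi p f with ht
      have hpairne : ¬(s = a ∧ t = b) := by
        rintro ⟨hs', ht'⟩
        exact hne (by rw [rf1, hE1, hs', ht'])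
      rcases lt_trichotomy t b with htb | htb | htb
      · rcases lt_trichotomy s a with hsa | hsa | hsa
        · exact pairNC (p := p) hT hf he₁ ⟨by omega, by omega, by omega⟩
        · have : t ≤ x := by
            apply hxle t (by omega) (by omega)
            rw [← hsa]
            rw [← rf1]
            exact hf
          omega
        · have h1 := haxT (by omega)
          apply pairNC (p := p) hT h1 hf
          rw [hloax (by omega), hhiax (by omega)]
          exact ⟨by omega, by omega, by omega⟩
      · rcases lt_trichotomy s a with hsa | hsa | hsa
        · have := hwidth f hf (by omega) (by omega) (by omega)
          omega
        · exact hpairne ⟨hsa, htb⟩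
        · have h1 := haxT (by omega)
          apply pairNC (p := p) hT h1 hf
          rw [hloax (by omega), hhiax (by omega)]
          exact ⟨by omega, by omega, by omega⟩
      · rcases Nat.lt_or_ge a s with has | has
        · exact pairNC (p := p) hT he₁ hf ⟨by omega, by omega, by omega⟩
        · have := hwidth f hf (by omega) (by omega) (by omega)
          omega
    have hfc := flip_core hn3 hT hA hp he₁ (by omega) (by omega) (by omega) hnew honly
    exact ⟨_, hfc.1, hfc.2⟩

private lemma conn_aux {X : Finset (Sym2 (ZMod n))} (hn3 : 3 ≤ n) {p : ZMod n}
    (hp : ∀ e ∈ X, p ∉ e) :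
    ∀ m T, mes p T = m → AvoidingTri n X T → FlipConn n X T (starTri n p) := by
  intro m
  induction m with
  | zero =>
    intro T hm hT
    rw [eq_star_of_mes_zero hn3 hT.1 hm]
    exact Relation.ReflTransGen.refl
  | succ k ih =>
    intro T hm hT
    obtain ⟨T', hstep, hmes⟩ := exists_step hn3 hp hT.1 hT.2 (by omega)
    exact Relation.ReflTransGen.head hstep (ih T' (by omega) hstep.2.1)

end Aux

/-- If some vertex `p` is an endpoint of no chord of `X`,
then every triangulation avoiding `X` is joined, by flips through
triangulations avoiding `X`, to the star triangulation at `p`; in particular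
`F₋ₓ` is connected. -/
theorem flipConn_to_star_of_vertex_untouched (n : ℕ) [NeZero n] (hn : 3 ≤ n)
    (X : Finset (Sym2 (ZMod n))) (hX : ∀ e ∈ X, IsChord n e)
    (p : ZMod n) (hp : ∀ e ∈ X, p ∉ e) :
    (∀ T, AvoidingTri n X T → FlipConn n X T (starTri n p)) ∧
      FlipGraphConnected n X := by
  have part1 : ∀ T, AvoidingTri n X T → FlipConn n X T (starTri n p) :=
    fun T hT => conn_aux hn hp (mes p T) T rfl hT
  refine ⟨part1, fun S T hS hT => ?_⟩
  have hsymm : Symmetric (FlipStep n X) := by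
    intro A B h
    exact ⟨h.2.1, h.1, by
      show (symmDiff B A).card = 2
      rw [symmDiff_comm]
      exact h.2.2⟩
  exact (part1 S hS).trans ((@Relation.ReflTransGen.stdSymm _ _ ⟨fun _ _ h => hsymm h⟩).symm _ _ (part1 T hT))

end FlipCut
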